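/- arXiv:2510.18504 — 2 statements merged into one kernel-verified Lean document; each statement's English description precedes it below -/
import Mathlib

section
/- For every integer m ≥ 1 and every y with −1 < y < 1, the Cauchy principal value integral (1/π)·p.v.∫_{−1}^{1} T_m(η) / ((η − y)·√(1 − η²)) dη equals U_{m−1}(y), i.e. the limit as ε → 0⁺ of (1/π)·∫_{η ∈ [−1,1], |η − y| > ε} T_m(η) / ((η − y)·√(1 − η²)) dη is U_{m−1}(y). -/
open Filter MeasureTheory Set Polynomial Polynomial.Chebyshev Real
open scoped Topology

noncomputable def w (x : ℝ) : ℝ := Real.sqrt (1 - x ^ 2)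

lemma w_nonneg (x : ℝ) : 0 ≤ w x := Real.sqrt_nonneg _
lemma w_cont : Continuous w := by unfold w; fun_prop
lemma w_pos {x : ℝ} (h₁ : -1 < x) (h₂ : x < 1) : 0 < w x := by
  apply Real.sqrt_pos.2; nlinarith
lemma w_sq {x : ℝ} (h₁ : -1 ≤ x) (h₂ : x ≤ 1) : w x ^ 2 = 1 - x ^ 2 := by
  rw [w, Real.sq_sqrt]; nlinarith
lemma w_one : w 1 = 0 := by simp [w]
lemma w_neg_one : w (-1) = 0 := by simp [w]

lemma hasDerivAt_w {x : ℝ} (h₁ : -1 < x) (h₂ : x < 1) :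
    HasDerivAt w (-x / w x) x := by
  have h : (1 : ℝ) - x ^ 2 ≠ 0 := by nlinarith
  have := (Real.hasDerivAt_sqrt h).comp x
    (((hasDerivAt_id x).pow 2).const_sub 1)
  refine this.congr_deriv (Eq.symm ?_)
  have hw := w_pos h₁ h₂
  rw [w] at hw ⊢
  field_simp
  simp only [id_eq]
  ring

lemma weight_integrable : IntegrableOn (fun x => 1 / w x) (Icc (-1 : ℝ) 1) := by
  rw [integrableOn_Icc_iff_integrableOn_Ioc]
  apply intervalIntegral.integrableOn_deriv_right_of_nonneg (g := Real.arcsin)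
  · exact Real.continuous_arcsin.continuousOn
  · intro x hx
    exact (Real.hasDerivAt_arcsin (by linarith [hx.1]) (by linarith [hx.2])).hasDerivWithinAt
  · intro x hx
    unfold w; positivity

lemma weight_integral : ∫ x in Icc (-1 : ℝ) 1, 1 / w x = Real.pi := by
  rw [integral_Icc_eq_integral_Ioc, ← intervalIntegral.integral_of_le (by norm_num : (-1:ℝ) ≤ 1)]
  have : ∀ x, 1 / w x = 1 / Real.sqrt (1 - x ^ 2) := fun x => rfl
  simp_rw [this]
  rw [intervalIntegral.integral_eq_sub_of_hasDeriv_right_of_le (by norm_num)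
    Real.continuous_arcsin.continuousOn
    (fun x hx => (Real.hasDerivAt_arcsin (by linarith [hx.1]) (by linarith [hx.2])).hasDerivWithinAt)
    ((intervalIntegrable_iff_integrableOn_Icc_of_le (by norm_num)).2 weight_integrable)]
  simp [Real.arcsin_one, Real.arcsin_neg_one]

lemma poly_bound (p : ℝ[X]) : ∃ C : ℝ, 0 ≤ C ∧ ∀ x ∈ Icc (-1:ℝ) 1, |p.eval x| ≤ C := by
  obtain ⟨C, hC⟩ := isCompact_Icc.exists_bound_of_continuousOn
    (p.continuous.continuousOn (s := Icc (-1:ℝ) 1))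
  exact ⟨C, le_trans (norm_nonneg _) (hC 0 (by norm_num)), fun x hx => hC x hx⟩

lemma poly_weight_integrable (p : ℝ[X]) :
    IntegrableOn (fun x => p.eval x / w x) (Icc (-1 : ℝ) 1) := by
  obtain ⟨C, hC0, hC⟩ := poly_bound p
  apply Integrable.mono' ((weight_integrable.const_mul C))
  · exact ((p.continuous.measurable).div w_cont.measurable).aestronglyMeasurable
  · filter_upwards [ae_restrict_mem measurableSet_Icc] with x hx
    rw [Real.norm_eq_abs, abs_div, abs_of_nonneg (w_nonneg x), mul_one_div]
    rcases eq_or_lt_of_le (w_nonneg x) with h | h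
    · simp [← h]
    · exact (div_le_div_iff_of_pos_right h).2 (hC x hx)

noncomputable def G (n : ℕ) (x : ℝ) : ℝ := (-(1:ℝ)/(n+1)) * (w x * (U ℝ n).eval x)

lemma G_deriv (n : ℕ) {x : ℝ} (h₁ : -1 < x) (h₂ : x < 1) :
    HasDerivAt (G n) ((T ℝ ((n:ℤ)+1)).eval x / w x) x := by
  have hU := (U ℝ (n:ℤ)).hasDerivAt x
  have hD := ((hasDerivAt_w h₁ h₂).mul hU).const_mul (-(1:ℝ)/(n+1))
  refine hD.congr_deriv (Eq.symm ?_)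
  have hid := congrArg (Polynomial.eval x) (add_one_mul_T_eq_poly_in_U (R := ℝ) (n:ℤ))
  simp only [eval_mul, eval_add, eval_intCast, eval_X, eval_sub, eval_one, eval_pow] at hid
  push_cast at hid
  have hw := w_pos h₁ h₂
  have hw2 := w_sq h₁.le h₂.le
  have hn : ((n:ℝ)+1) ≠ 0 := by positivity
  field_simp
  linear_combination hid + eval x (derivative (U ℝ (n:ℤ))) * hw2

lemma orth (n : ℕ) : ∫ x in Icc (-1:ℝ) 1, (T ℝ ((n:ℤ)+1)).eval x / w x = 0 := by
  have hG : Continuous (G n) := by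
    unfold G w; fun_prop
  have hint : IntervalIntegrable (fun x => (T ℝ ((n:ℤ)+1)).eval x / w x) volume (-1) 1 :=
    (intervalIntegrable_iff_integrableOn_Icc_of_le (by norm_num)).2
      (poly_weight_integrable (T ℝ ((n:ℤ)+1)))
  have := intervalIntegral.integral_eq_sub_of_hasDeriv_right_of_le (by norm_num : (-1:ℝ) ≤ 1)
    hG.continuousOn
    (fun x hx => ((G_deriv n hx.1 hx.2).hasDerivWithinAt))
    hint
  rw [integral_Icc_eq_integral_Ioc, ← intervalIntegral.integral_of_le (by norm_num : (-1:ℝ) ≤ 1),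
    this]
  simp [G, w_one, w_neg_one]

def S (y ε : ℝ) : Set ℝ := Icc (-1 : ℝ) 1 ∩ {x : ℝ | ε < |x - y|}

lemma S_meas (y ε : ℝ) : MeasurableSet (S y ε) :=
  measurableSet_Icc.inter ((isOpen_lt continuous_const (by fun_prop)).measurableSet)

lemma S_subset (y ε : ℝ) : S y ε ⊆ Icc (-1 : ℝ) 1 := inter_subset_left

lemma kernel_integrableOn (y : ℝ) (p : ℝ[X]) {ε : ℝ} (hε : 0 < ε) :
    IntegrableOn (fun x => p.eval x / ((x - y) * w x)) (S y ε) := by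
  obtain ⟨C, hC0, hC⟩ := poly_bound p
  have hg : IntegrableOn (fun x => (C/ε) * (1 / w x)) (S y ε) :=
    (weight_integrable.mono_set (S_subset y ε)).const_mul _
  apply Integrable.mono' hg
  · exact ((p.continuous.measurable).div
      (((continuous_id.sub continuous_const).mul w_cont).measurable)).aestronglyMeasurable
  · filter_upwards [ae_restrict_mem (S_meas y ε)] with x hx
    rw [Real.norm_eq_abs, abs_div, abs_mul, abs_of_nonneg (w_nonneg x)]
    rcases eq_or_lt_of_le (w_nonneg x) with h | h
    · simp [← h]
    · have h1 : ε * w x ≤ |x - y| * w x :=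
        mul_le_mul_of_nonneg_right (le_of_lt hx.2) (w_nonneg x)
      have h2 : 0 < ε * w x := by positivity
      calc |p.eval x| / (|x - y| * w x) ≤ C / (ε * w x) := by gcongr; exact hC x hx.1
        _ = C / ε * (1 / w x) := by rw [mul_one_div, div_div]

lemma kernel1_integrableOn (y : ℝ) {ε : ℝ} (hε : 0 < ε) :
    IntegrableOn (fun x => 1 / ((x - y) * w x)) (S y ε) := by
  simpa using kernel_integrableOn y 1 hε
lemma tendsto_weight_S (y : ℝ) (hy₁ : -1 < y) (hy₂ : y < 1) (p : ℝ[X]) :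
    Tendsto (fun ε => ∫ x in S y ε, p.eval x / w x) (𝓝[>] (0:ℝ))
      (𝓝 (∫ x in Icc (-1:ℝ) 1, p.eval x / w x)) := by
  set f : ℝ → ℝ := fun x => p.eval x / w x with hf
  set δ : ℝ := min ((1 - y)/2) ((y + 1)/2) with hδdef
  have hδ : 0 < δ := by
    apply lt_min <;> linarith
  have hKsub : Icc (y - δ) (y + δ) ⊆ Ioo (-1 : ℝ) 1 := by
    intro x hx
    constructor
    · have := hx.1; have : y - δ ≥ y - (y+1)/2 := by
        have := min_le_right ((1 - y)/2) ((y + 1)/2); linarith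
      linarith [hx.1]
    · have : δ ≤ (1 - y)/2 := min_le_left _ _
      linarith [hx.2]
  -- bound on K
  have hfc : ContinuousOn f (Icc (y - δ) (y + δ)) := by
    apply ContinuousOn.div p.continuous.continuousOn w_cont.continuousOn
    intro x hx
    exact ne_of_gt (w_pos (hKsub hx).1 (hKsub hx).2)
  obtain ⟨M, hM⟩ := isCompact_Icc.exists_bound_of_continuousOn hfc
  have hM0 : 0 ≤ M := le_trans (norm_nonneg _) (hM y (by constructor <;> linarith))
  -- key bound
  have key : ∀ ε : ℝ, ε ∈ Ioo 0 δ →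
      ‖(∫ x in S y ε, f x) - ∫ x in Icc (-1:ℝ) 1, f x‖ ≤ M * (2 * ε) := by
    intro ε hε
    set Tset : Set ℝ := Icc (-1 : ℝ) 1 ∩ {x : ℝ | |x - y| ≤ ε} with hT
    have hTsub : Tset ⊆ Icc (y - ε) (y + ε) := by
      intro x hx
      have := hx.2
      simp only [mem_setOf_eq, abs_le] at this
      constructor <;> linarith [this.1, this.2]
    have hTmeas : MeasurableSet Tset :=
      measurableSet_Icc.inter ((isClosed_le (by fun_prop) continuous_const).measurableSet)
    have hunion : S y ε ∪ Tset = Icc (-1 : ℝ) 1 := by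
      ext x
      simp only [_root_.S, Tset, mem_union, mem_inter_iff, mem_setOf_eq]
      constructor
      · rintro (⟨h1, _⟩ | ⟨h1, _⟩) <;> exact h1
      · intro h
        rcases le_or_gt (|x - y|) ε with h' | h'
        · exact Or.inr ⟨h, h'⟩
        · exact Or.inl ⟨h, h'⟩
    have hdisj : Disjoint (S y ε) Tset := by
      rw [Set.disjoint_left]
      rintro x ⟨_, h1⟩ ⟨_, h2⟩
      simp only [mem_setOf_eq] at h1 h2
      exact absurd h2 (not_le.2 h1)
    have hint := poly_weight_integrable p
    have hintS : IntegrableOn f (S y ε) := hint.mono_set (S_subset y ε)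
    have hintT : IntegrableOn f Tset := hint.mono_set inter_subset_left
    have hsplit : ∫ x in Icc (-1:ℝ) 1, f x = (∫ x in S y ε, f x) + ∫ x in Tset, f x := by
      rw [← hunion, setIntegral_union hdisj hTmeas hintS hintT]
    rw [hsplit]
    have : ‖∫ x in Tset, f x‖ ≤ M * (volume Tset).toReal := by
      apply norm_setIntegral_le_of_norm_le_const
      · exact lt_of_le_of_lt (measure_mono hTsub) (by simp)
      · intro x hx
        exact hM x (Icc_subset_Icc (by linarith [hε.2]) (by linarith [hε.2]) (hTsub hx))
    have hvol : (volume Tset).toReal ≤ 2 * ε := by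
      have h1 : volume Tset ≤ volume (Icc (y - ε) (y + ε)) := measure_mono hTsub
      rw [Real.volume_Icc] at h1
      have := ENNReal.toReal_mono (by simp) h1
      rw [ENNReal.toReal_ofReal (by linarith [hε.1.le])] at this
      linarith
    calc ‖(∫ x in S y ε, f x) - ((∫ x in S y ε, f x) + ∫ x in Tset, f x)‖
        = ‖∫ x in Tset, f x‖ := by rw [sub_add_eq_sub_sub, sub_self, zero_sub, norm_neg]
      _ ≤ M * (volume Tset).toReal := this
      _ ≤ M * (2 * ε) := by nlinarith
  -- conclude tendsto
  have hzero : Tendsto (fun ε : ℝ => (∫ x in S y ε, f x) - ∫ x in Icc (-1:ℝ) 1, f x)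
      (𝓝[>] (0:ℝ)) (𝓝 0) := by
    have hg : Tendsto (fun ε : ℝ => M * (2 * ε)) (𝓝[>] (0:ℝ)) (𝓝 0) := by
      have : Tendsto (fun ε : ℝ => M * (2 * ε)) (𝓝 (0:ℝ)) (𝓝 (M * (2 * 0))) :=
        (tendsto_id.const_mul 2).const_mul M
      simpa using this.mono_left nhdsWithin_le_nhds
    exact squeeze_zero_norm' (by filter_upwards [Ioo_mem_nhdsGT hδ] with ε hε using key ε hε) hg
  have := hzero.add_const (∫ x in Icc (-1:ℝ) 1, f x)
  simpa using this
section PV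
variable {y : ℝ} (hy₁ : -1 < y) (hy₂ : y < 1)

noncomputable def DD (y x : ℝ) : ℝ := 1 - y * x + w y * w x

lemma DD_pos (hy₁ : -1 < y) (hy₂ : y < 1) {x : ℝ} (h₁ : -1 ≤ x) (h₂ : x ≤ 1) :
    0 < DD y x := by
  have h1 : 0 ≤ w y * w x := mul_nonneg (w_nonneg y) (w_nonneg x)
  have h2 : y * x < 1 := by
    nlinarith [mul_pos (by linarith : (0:ℝ) < 1 - y) (by linarith : (0:ℝ) < 1 + y),
      sq_nonneg (y - x), sq_nonneg (y + x)]
  unfold DD; linarith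

lemma DD_cont : Continuous (DD y) := by
  unfold DD
  exact (continuous_const.sub (continuous_const.mul continuous_id)).add
    (continuous_const.mul w_cont)

/-- derivative of the log antiderivative; `c = 1` for right branch `log (x-y)`,
 but we handle both branches by giving the inner function abstractly. -/
lemma antideriv_right (hy₁ : -1 < y) (hy₂ : y < 1) {x : ℝ} (hx₁ : -1 < x) (hx₂ : x < 1)
    (hxy : x ≠ y) :
    HasDerivAt (fun t => (1 / w y) * (Real.log (t - y) - Real.log (DD y t)))
      (1 / ((x - y) * w x)) x := by
  have hs : 0 < w y := w_pos hy₁ hy₂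
  have hw : 0 < w x := w_pos hx₁ hx₂
  have hD : 0 < DD y x := DD_pos hy₁ hy₂ hx₁.le hx₂.le
  have hxy' : x - y ≠ 0 := sub_ne_zero.2 hxy
  have h1 : HasDerivAt (fun t : ℝ => Real.log (t - y)) (1 / (x - y)) x := by
    have := ((hasDerivAt_id x).sub_const y).log hxy'
    simpa using this
  have hDD : HasDerivAt (fun t => DD y t) (-y + w y * (-x / w x)) x := by
    unfold DD
    exact ((hasDerivAt_const x 1).sub ((hasDerivAt_id x).const_mul y)).add
      ((hasDerivAt_w hx₁ hx₂).const_mul (w y)) |>.congr_deriv (by ring)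
  have h2 : HasDerivAt (fun t : ℝ => Real.log (DD y t))
      ((-y + w y * (-x / w x)) / DD y x) x := hDD.log (ne_of_gt hD)
  have := (h1.sub h2).const_mul (1 / w y)
  refine this.congr_deriv (Eq.symm ?_)
  have hs2 : w y ^ 2 = 1 - y ^ 2 := w_sq hy₁.le hy₂.le
  have hw2 : w x ^ 2 = 1 - x ^ 2 := w_sq hx₁.le hx₂.le
  have hD' : DD y x = 1 - y * x + w y * w x := rfl
  have key : w x * DD y x + (x - y) * (y * w x + w y * x) = w y * DD y x := by
    rw [hD']; linear_combination (-(w x)) * hs2 + (w y) * hw2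
  field_simp
  linear_combination (-1 : ℝ) * key

lemma antideriv_left (hy₁ : -1 < y) (hy₂ : y < 1) {x : ℝ} (hx₁ : -1 < x) (hx₂ : x < 1)
    (hxy : x ≠ y) :
    HasDerivAt (fun t => (1 / w y) * (Real.log (y - t) - Real.log (DD y t)))
      (1 / ((x - y) * w x)) x := by
  have hs : 0 < w y := w_pos hy₁ hy₂
  have hw : 0 < w x := w_pos hx₁ hx₂
  have hD : 0 < DD y x := DD_pos hy₁ hy₂ hx₁.le hx₂.le
  have hxy' : x - y ≠ 0 := sub_ne_zero.2 hxy
  have h1 : HasDerivAt (fun t : ℝ => Real.log (y - t)) (1 / (x - y)) x := by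
    have := (((hasDerivAt_id x).const_sub y)).log (by simpa [sub_ne_zero] using (Ne.symm hxy))
    refine this.congr_deriv (Eq.symm ?_)
    have hyx : y - x ≠ 0 := sub_ne_zero.2 (Ne.symm hxy)
    simp only [id_eq]
    field_simp
    ring
  have hDD : HasDerivAt (fun t => DD y t) (-y + w y * (-x / w x)) x := by
    unfold DD
    exact ((hasDerivAt_const x 1).sub ((hasDerivAt_id x).const_mul y)).add
      ((hasDerivAt_w hx₁ hx₂).const_mul (w y)) |>.congr_deriv (by ring)
  have h2 : HasDerivAt (fun t : ℝ => Real.log (DD y t))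
      ((-y + w y * (-x / w x)) / DD y x) x := hDD.log (ne_of_gt hD)
  have := (h1.sub h2).const_mul (1 / w y)
  refine this.congr_deriv (Eq.symm ?_)
  have hs2 : w y ^ 2 = 1 - y ^ 2 := w_sq hy₁.le hy₂.le
  have hw2 : w x ^ 2 = 1 - x ^ 2 := w_sq hx₁.le hx₂.le
  have key : w x * DD y x + (x - y) * (y * w x + w y * x) = w y * DD y x := by
    show w x * DD y x + (x - y) * (y * w x + w y * x) = w y * DD y x
    unfold DD; linear_combination (-(w x)) * hs2 + (w y) * hw2
  field_simp
  linear_combination (-1 : ℝ) * key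

lemma ftc_right (hy₁ : -1 < y) (hy₂ : y < 1) {ε : ℝ} (hε : 0 < ε) (hε' : y + ε < 1) :
    ∫ x in (y + ε)..1, 1 / ((x - y) * w x)
      = (0:ℝ) - (1 / w y) * (Real.log ε - Real.log (DD y (y + ε))) := by
  have hcont : ContinuousOn (fun t => (1 / w y) * (Real.log (t - y) - Real.log (DD y t)))
      (Icc (y + ε) 1) := by
    apply ContinuousOn.mul continuousOn_const
    apply ContinuousOn.sub
    · apply ContinuousOn.log (by fun_prop)
      intro t ht
      have := ht.1
      intro h
      have : t = y := by linarith [sub_eq_zero.1 h]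
      linarith
    · apply ContinuousOn.log DD_cont.continuousOn
      intro t ht
      exact ne_of_gt (DD_pos hy₁ hy₂ (by linarith [ht.1]) ht.2)
  have hderiv : ∀ x ∈ Ioo (y + ε) 1,
      HasDerivWithinAt (fun t => (1 / w y) * (Real.log (t - y) - Real.log (DD y t)))
        (1 / ((x - y) * w x)) (Ioi x) x := by
    intro x hx
    exact (antideriv_right hy₁ hy₂ (by linarith [hx.1]) hx.2
      (by intro h; rw [h] at hx; linarith [hx.1])).hasDerivWithinAt
  have hint : IntervalIntegrable (fun x => 1 / ((x - y) * w x)) volume (y + ε) 1 := by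
    rw [intervalIntegrable_iff]
    apply (kernel1_integrableOn y hε).mono_set
    rw [uIoc_of_le (by linarith)]
    intro x hx
    refine ⟨⟨by linarith [hx.1], hx.2⟩, ?_⟩
    simp only [mem_setOf_eq]
    rw [abs_of_pos (by linarith [hx.1])]
    linarith [hx.1]
  rw [intervalIntegral.integral_eq_sub_of_hasDeriv_right_of_le (by linarith) hcont hderiv hint]
  have h1 : Real.log (1 - y) - Real.log (DD y 1) = 0 := by
    unfold DD; rw [w_one]; ring_nf
  have h2 : (y + ε) - y = ε := by ring
  rw [h2, show DD y 1 = 1 - y by unfold DD; rw [w_one]; ring]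
  ring

lemma ftc_left (hy₁ : -1 < y) (hy₂ : y < 1) {ε : ℝ} (hε : 0 < ε) (hε' : -1 < y - ε) :
    ∫ x in (-1:ℝ)..(y - ε), 1 / ((x - y) * w x)
      = (1 / w y) * (Real.log ε - Real.log (DD y (y - ε))) - 0 := by
  have hcont : ContinuousOn (fun t => (1 / w y) * (Real.log (y - t) - Real.log (DD y t)))
      (Icc (-1 : ℝ) (y - ε)) := by
    apply ContinuousOn.mul continuousOn_const
    apply ContinuousOn.sub
    · apply ContinuousOn.log (by fun_prop)
      intro t ht
      have := ht.2
      intro h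
      have : t = y := by linarith [sub_eq_zero.1 h]
      linarith
    · apply ContinuousOn.log DD_cont.continuousOn
      intro t ht
      exact ne_of_gt (DD_pos hy₁ hy₂ ht.1 (by linarith [ht.2]))
  have hderiv : ∀ x ∈ Ioo (-1 : ℝ) (y - ε),
      HasDerivWithinAt (fun t => (1 / w y) * (Real.log (y - t) - Real.log (DD y t)))
        (1 / ((x - y) * w x)) (Ioi x) x := by
    intro x hx
    exact (antideriv_left hy₁ hy₂ hx.1 (by linarith [hx.2])
      (by intro h; rw [h] at hx; linarith [hx.2])).hasDerivWithinAt
  have hint : IntervalIntegrable (fun x => 1 / ((x - y) * w x)) volume (-1) (y - ε) := by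
    rw [intervalIntegrable_iff]
    apply (kernel1_integrableOn y (half_pos hε)).mono_set
    rw [uIoc_of_le (by linarith)]
    intro x hx
    refine ⟨⟨by linarith [hx.1], by linarith [hx.2]⟩, ?_⟩
    simp only [mem_setOf_eq]
    rw [abs_of_neg (by linarith [hx.2] : x - y < 0)]
    linarith [hx.2]
  rw [intervalIntegral.integral_eq_sub_of_hasDeriv_right_of_le (by linarith) hcont hderiv hint]
  have h2 : y - (y - ε) = ε := by ring
  rw [h2, show DD y (-1) = 1 + y by unfold DD; rw [w_neg_one]; ring,
    show y - (-1 : ℝ) = 1 + y by ring]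
  ring

lemma S_decomp (hy₁ : -1 < y) (hy₂ : y < 1) {ε : ℝ} (hε : 0 < ε)
    (h1 : -1 < y - ε) (h2 : y + ε < 1) :
    S y ε = Ico (-1 : ℝ) (y - ε) ∪ Ioc (y + ε) 1 := by
  ext x
  simp only [_root_.S, mem_inter_iff, mem_Icc, mem_setOf_eq, mem_union, mem_Ico, mem_Ioc]
  constructor
  · rintro ⟨⟨hx1, hx2⟩, habs⟩
    rcases lt_abs.1 habs with h | h
    · exact Or.inr ⟨by linarith, hx2⟩
    · exact Or.inl ⟨hx1, by linarith⟩
  · rintro (⟨hx1, hx2⟩ | ⟨hx1, hx2⟩)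
    · exact ⟨⟨hx1, by linarith⟩, lt_abs.2 (Or.inr (by linarith))⟩
    · exact ⟨⟨by linarith, hx2⟩, lt_abs.2 (Or.inl (by linarith))⟩

lemma kernel_pv (hy₁ : -1 < y) (hy₂ : y < 1) :
    Tendsto (fun ε => ∫ x in S y ε, 1 / ((x - y) * w x)) (𝓝[>] (0:ℝ)) (𝓝 0) := by
  set δ : ℝ := min (1 - y) (y + 1) with hδdef
  have hδ : 0 < δ := lt_min (by linarith) (by linarith)
  have heq : ∀ ε ∈ Ioo (0:ℝ) δ,
      ∫ x in S y ε, 1 / ((x - y) * w x)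
        = (1 / w y) * (Real.log (DD y (y + ε)) - Real.log (DD y (y - ε))) := by
    intro ε hε
    obtain ⟨hεp, hεδ⟩ := hε
    have hε1 : -1 < y - ε := by
      have := min_le_right (1 - y) (y + 1); have := hεδ; simp only [hδdef] at *
      linarith [min_le_right (1 - y) (y + 1)]
    have hε2 : y + ε < 1 := by
      linarith [min_le_left (1 - y) (y + 1), hεδ]
    rw [S_decomp hy₁ hy₂ hεp hε1 hε2]
    have hintL : IntegrableOn (fun x => 1 / ((x - y) * w x)) (Ico (-1 : ℝ) (y - ε)) := by
      apply (kernel1_integrableOn y (half_pos hεp)).mono_set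
      rintro x ⟨hxa, hxb⟩
      refine ⟨⟨hxa, by linarith⟩, ?_⟩
      simp only [mem_setOf_eq]
      rw [abs_of_neg (by linarith : x - y < 0)]
      linarith
    have hintR : IntegrableOn (fun x => 1 / ((x - y) * w x)) (Ioc (y + ε) 1) := by
      apply (kernel1_integrableOn y (half_pos hεp)).mono_set
      rintro x ⟨hxa, hxb⟩
      refine ⟨⟨by linarith, hxb⟩, ?_⟩
      simp only [mem_setOf_eq]
      rw [abs_of_pos (by linarith : 0 < x - y)]
      linarith
    rw [setIntegral_union (by
        rw [Set.disjoint_left]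
        rintro x ⟨_, hx2⟩ ⟨hx3, _⟩
        linarith) measurableSet_Ioc hintL hintR]
    rw [integral_Ico_eq_integral_Ioo, ← integral_Ioc_eq_integral_Ioo,
      ← intervalIntegral.integral_of_le (by linarith : (-1:ℝ) ≤ y - ε),
      ← intervalIntegral.integral_of_le (by linarith : y + ε ≤ 1)]
    rw [ftc_left hy₁ hy₂ hεp hε1, ftc_right hy₁ hy₂ hεp hε2]
    ring
  have hDy : 0 < DD y y := DD_pos hy₁ hy₂ hy₁.le hy₂.le
  have hlim : Tendsto (fun ε : ℝ => (1 / w y) *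
      (Real.log (DD y (y + ε)) - Real.log (DD y (y - ε)))) (𝓝[>] (0:ℝ)) (𝓝 0) := by
    have h1 : Tendsto (fun ε : ℝ => DD y (y + ε)) (𝓝 0) (𝓝 (DD y y)) :=
      (DD_cont.comp (continuous_const.add continuous_id)).tendsto' 0 (DD y y) (by simp)
    have h2 : Tendsto (fun ε : ℝ => DD y (y - ε)) (𝓝 0) (𝓝 (DD y y)) :=
      (DD_cont.comp (continuous_const.sub continuous_id)).tendsto' 0 (DD y y) (by simp)
    have hl1 := (Real.continuousAt_log (ne_of_gt hDy)).tendsto.comp h1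
    have hl2 := (Real.continuousAt_log (ne_of_gt hDy)).tendsto.comp h2
    have := ((hl1.sub hl2).const_mul (1 / w y)).mono_left (nhdsWithin_le_nhds :
      𝓝[>] (0:ℝ) ≤ 𝓝 0)
    simpa using this
  apply hlim.congr'
  filter_upwards [Ioo_mem_nhdsGT hδ] with ε hε
  exact (heq ε hε).symm
end PV
section Ind
variable {y : ℝ}

lemma weight1_tendsto (hy₁ : -1 < y) (hy₂ : y < 1) :
    Tendsto (fun ε => ∫ x in S y ε, 1 / w x) (𝓝[>] (0:ℝ)) (𝓝 Real.pi) := by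
  have h := tendsto_weight_S y hy₁ hy₂ 1
  simp only [eval_one] at h
  rwa [weight_integral] at h

lemma key_tendsto (hy₁ : -1 < y) (hy₂ : y < 1) (n : ℕ) :
    Tendsto (fun ε => ∫ x in S y ε, (T ℝ (n:ℤ)).eval x / ((x - y) * w x)) (𝓝[>] (0:ℝ))
      (𝓝 (Real.pi * (U ℝ ((n:ℤ) - 1)).eval y)) := by
  induction n using Nat.twoStepInduction with
  | zero =>
    simp only [Nat.cast_zero, T_zero, eval_one, zero_sub, U_neg_one, eval_zero, mul_zero]
    exact kernel_pv hy₁ hy₂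
  | one =>
    have heq : ∀ᶠ ε in 𝓝[>] (0:ℝ),
        (∫ x in S y ε, 1 / w x) + y * ∫ x in S y ε, 1 / ((x - y) * w x)
          = ∫ x in S y ε, (T ℝ ((1:ℕ):ℤ)).eval x / ((x - y) * w x) := by
      filter_upwards [self_mem_nhdsWithin] with ε (hε : 0 < ε)
      have hw1 : IntegrableOn (fun x => 1 / w x) (S y ε) := by
        have := (poly_weight_integrable 1).mono_set (S_subset y ε)
        simpa using this
      have hk : IntegrableOn (fun x => y * (1 / ((x - y) * w x))) (S y ε) :=
        (kernel1_integrableOn y hε).const_mul y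
      have hsum : ∫ x in S y ε, (T ℝ ((1:ℕ):ℤ)).eval x / ((x - y) * w x)
          = ∫ x in S y ε, (1 / w x + y * (1 / ((x - y) * w x))) := by
        apply setIntegral_congr_fun (S_meas y ε)
        intro x hx
        have hxy : x - y ≠ 0 := by
          have h := hx.2
          simp only [mem_setOf_eq] at h
          intro hc
          rw [hc] at h
          simp at h
          linarith
        simp only [Nat.cast_one, T_one, eval_X]
        rcases eq_or_ne (w x) 0 with h | h
        · simp [h]
        · field_simp
          ring
      rw [hsum, integral_add hw1 hk, integral_const_mul]
    have h2 := (kernel_pv hy₁ hy₂).const_mul y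
    have hfin := ((weight1_tendsto hy₁ hy₂).add h2).congr' heq
    simpa using hfin
  | more n ih1 ih2 =>
    have hc2 : ((n + 2 : ℕ) : ℤ) = (n:ℤ) + 2 := by push_cast; ring
    have hc1 : ((n + 1 : ℕ) : ℤ) = (n:ℤ) + 1 := by push_cast; ring
    simp only [hc1] at ih2
    simp only [hc2]
    have heq : ∀ᶠ ε in 𝓝[>] (0:ℝ),
        ((2:ℝ) * ∫ x in S y ε, (T ℝ ((n:ℤ)+1)).eval x / w x)
          + ((2*y) * (∫ x in S y ε, (T ℝ ((n:ℤ)+1)).eval x / ((x - y) * w x))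
            - (∫ x in S y ε, (T ℝ (n:ℤ)).eval x / ((x - y) * w x)))
          = ∫ x in S y ε, (T ℝ ((n:ℤ)+2)).eval x / ((x - y) * w x) := by
      filter_upwards [self_mem_nhdsWithin] with ε (hε : 0 < ε)
      have I1 : IntegrableOn (fun x => (2:ℝ) * ((T ℝ ((n:ℤ)+1)).eval x / w x)) (S y ε) :=
        ((poly_weight_integrable (T ℝ ((n:ℤ)+1))).mono_set (S_subset y ε)).const_mul 2
      have I2 : IntegrableOn
          (fun x => (2*y) * ((T ℝ ((n:ℤ)+1)).eval x / ((x - y) * w x))) (S y ε) :=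
        (kernel_integrableOn y (T ℝ ((n:ℤ)+1)) hε).const_mul (2*y)
      have I3 : IntegrableOn (fun x => (T ℝ (n:ℤ)).eval x / ((x - y) * w x)) (S y ε) :=
        kernel_integrableOn y (T ℝ (n:ℤ)) hε
      have I23 : IntegrableOn
          (fun x => (2*y) * ((T ℝ ((n:ℤ)+1)).eval x / ((x - y) * w x))
            - (T ℝ (n:ℤ)).eval x / ((x - y) * w x)) (S y ε) := I2.sub I3
      have hsum : ∫ x in S y ε, (T ℝ ((n:ℤ)+2)).eval x / ((x - y) * w x)
          = ∫ x in S y ε, ((2:ℝ) * ((T ℝ ((n:ℤ)+1)).eval x / w x)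
            + ((2*y) * ((T ℝ ((n:ℤ)+1)).eval x / ((x - y) * w x))
              - (T ℝ (n:ℤ)).eval x / ((x - y) * w x))) := by
        apply setIntegral_congr_fun (S_meas y ε)
        intro x hx
        have hxy : x - y ≠ 0 := by
          have h := hx.2
          simp only [mem_setOf_eq] at h
          intro hc
          rw [hc] at h
          simp at h
          linarith
        have hrec := congrArg (Polynomial.eval x) (T_add_two ℝ (n:ℤ))
        simp only [eval_mul, eval_sub, eval_ofNat, eval_X] at hrec
        dsimp only
        rw [hrec]
        rcases eq_or_ne (w x) 0 with h | h
        · simp [h]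
        · field_simp
          ring
      rw [hsum, integral_add I1 I23, integral_sub I2 I3, integral_const_mul, integral_const_mul]
    have h1 : Tendsto (fun ε => (2:ℝ) * ∫ x in S y ε, (T ℝ ((n:ℤ)+1)).eval x / w x)
        (𝓝[>] (0:ℝ)) (𝓝 0) := by
      have := (tendsto_weight_S y hy₁ hy₂ (T ℝ ((n:ℤ)+1))).const_mul (2:ℝ)
      rwa [orth n, mul_zero] at this
    have h2 := (ih2.const_mul (2*y)).sub ih1
    have hfin := (h1.add h2).congr' heq
    have hrecU := congrArg (Polynomial.eval y) (U_add_two ℝ ((n:ℤ) - 1))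
    simp only [eval_mul, eval_sub, eval_ofNat, eval_X] at hrecU
    have hid : (n:ℤ) - 1 + 2 = (n:ℤ) + 2 - 1 := by ring
    have hid1 : (n:ℤ) - 1 + 1 = (n:ℤ) + 1 - 1 := by ring
    rw [hid, hid1] at hrecU
    have hval : (0:ℝ) + ((2*y) * (Real.pi * (U ℝ ((n:ℤ) + 1 - 1)).eval y)
        - Real.pi * (U ℝ ((n:ℤ) - 1)).eval y)
        = Real.pi * (U ℝ ((n:ℤ) + 2 - 1)).eval y := by
      rw [hrecU]; ring
    rwa [hval] at hfin
end Ind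

/-- Spectral relation for the Cauchy singular kernel with Chebyshev weight:
for `m ≥ 1` and `-1 < y < 1`,
`(1/π)·p.v.∫_{-1}^{1} T_m(η)/((η - y)√(1-η²)) dη = U_{m-1}(y)`,
the principal value being the limit as `ε → 0⁺` of the integral over
`{η ∈ [-1,1] : |η - y| > ε}`. -/
theorem stmt2 (m : ℕ) (hm : 1 ≤ m) (y : ℝ) (hy₁ : -1 < y) (hy₂ : y < 1) :
    Tendsto
      (fun ε : ℝ =>
        (1 / Real.pi) *
          ∫ η in Set.Icc (-1 : ℝ) 1 ∩ {η : ℝ | ε < |η - y|},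
            (Polynomial.Chebyshev.T ℝ m).eval η /
              ((η - y) * Real.sqrt (1 - η ^ 2)))
      (𝓝[>] 0)
      (𝓝 ((Polynomial.Chebyshev.U ℝ (m - 1)).eval y)) := by
  have h := (key_tendsto hy₁ hy₂ m).const_mul (1 / Real.pi)
  have hπ : Real.pi ≠ 0 := Real.pi_ne_zero
  have hval : (1 / Real.pi) * (Real.pi * (U ℝ ((m:ℤ) - 1)).eval y)
      = (U ℝ ((m:ℤ) - 1)).eval y := by
    field_simp
  rw [hval] at h
  have hcast : ((m - 1 : ℕ) : ℤ) = (m:ℤ) - 1 := by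
    omega
  exact h
end

section
/- Let R : ℕ × ℕ → ℂ (indexed by n, m ≥ 1) satisfy Σ_{n=1}^∞ Σ_{m=1}^∞ |R_{nm}|² < ∞, let f ∈ ℓ²(ℕ, ℂ), and suppose the operator A on ℓ² defined by (Aa)_n = a_n + Σ_{m=1}^∞ R_{nm} a_m is bijective, with a = A⁻¹f. Then there exists N₀ such that for every N ≥ N₀ the finite truncated system x_n + Σ_{m=1}^{N} R_{nm} x_m = f_n (1 ≤ n ≤ N) has a unique solution (a_1^N, …, a_N^N), and the sequences ā^N = (a_1^N, …, a_N^N, 0, 0, …) converge to a in the ℓ² norm as N → ∞. -/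
open scoped BigOperators
open Filter Topology

noncomputable section
namespace Stmt10Aux

abbrev L := lp (fun _ : ℕ => ℂ) 2

variable {S : ℕ × ℕ → ℂ}

lemma two_toReal : (2 : ENNReal).toReal = 2 := by simp

lemma rowSummable (hS : Summable fun p : ℕ × ℕ => ‖S p‖ ^ 2) (n : ℕ) :
    Summable fun m => ‖S (n, m)‖ ^ 2 :=
  ((summable_prod_of_nonneg (fun p => sq_nonneg _)).mp hS).1 n

lemma colsumSummable (hS : Summable fun p : ℕ × ℕ => ‖S p‖ ^ 2) :
    Summable fun n => ∑' m, ‖S (n, m)‖ ^ 2 :=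
  ((summable_prod_of_nonneg (fun p => sq_nonneg _)).mp hS).2

/-- conjugated row as an `ℓ²` element -/
def rowStar (hS : Summable fun p : ℕ × ℕ => ‖S p‖ ^ 2) (n : ℕ) : L :=
  ⟨fun m => starRingEnd ℂ (S (n, m)), memℓp_gen (by
    simpa [two_toReal, Real.rpow_natCast] using (rowSummable hS n))⟩

lemma rowStar_apply (hS : Summable fun p : ℕ × ℕ => ‖S p‖ ^ 2) (n m : ℕ) :
    (rowStar hS n : ∀ _ : ℕ, ℂ) m = starRingEnd ℂ (S (n, m)) := rfl

lemma inner_rowStar (hS : Summable fun p : ℕ × ℕ => ‖S p‖ ^ 2) (b : L) (n : ℕ) :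
    (inner ℂ (rowStar hS n) b) = ∑' m, S (n, m) * b m := by
  rw [lp.inner_eq_tsum]
  refine tsum_congr fun m => ?_
  simp [rowStar_apply, RCLike.inner_apply, mul_comm]

lemma summable_row_mul (hS : Summable fun p : ℕ × ℕ => ‖S p‖ ^ 2) (b : L) (n : ℕ) :
    Summable fun m => S (n, m) * b m := by
  have := lp.summable_inner (𝕜 := ℂ) (rowStar hS n) b
  refine this.congr fun m => ?_
  simp [rowStar_apply, RCLike.inner_apply, mul_comm]

end Stmt10Aux

namespace Stmt10Aux
variable {S : ℕ × ℕ → ℂ}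

/-- the sequence `n ↦ ∑_m S n m * b m` -/
def app (S : ℕ × ℕ → ℂ) (b : L) (n : ℕ) : ℂ := ∑' m, S (n, m) * b m

lemma norm_rowStar_sq (hS : Summable fun p : ℕ × ℕ => ‖S p‖ ^ 2) (n : ℕ) :
    ‖rowStar hS n‖ ^ 2 = ∑' m, ‖S (n, m)‖ ^ 2 := by
  have h := lp.norm_rpow_eq_tsum (p := 2) (by simp) (rowStar hS n)
  rw [two_toReal] at h
  calc ‖rowStar hS n‖ ^ 2 = ‖rowStar hS n‖ ^ (2 : ℝ) := by
        rw [← Real.rpow_natCast]; norm_num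
    _ = ∑' m, ‖(rowStar hS n : ∀ _ : ℕ, ℂ) m‖ ^ (2 : ℝ) := h
    _ = ∑' m, ‖S (n, m)‖ ^ 2 := by
        refine tsum_congr fun m => ?_
        rw [rowStar_apply, ← Real.rpow_natCast]
        simp

lemma app_sq_le (hS : Summable fun p : ℕ × ℕ => ‖S p‖ ^ 2) (b : L) (n : ℕ) :
    ‖app S b n‖ ^ 2 ≤ (∑' m, ‖S (n, m)‖ ^ 2) * ‖b‖ ^ 2 := by
  have h1 : ‖app S b n‖ ≤ ‖rowStar hS n‖ * ‖b‖ := by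
    rw [app, ← inner_rowStar hS b n]
    exact norm_inner_le_norm (𝕜 := ℂ) _ _
  have h2 : ‖app S b n‖ ^ 2 ≤ (‖rowStar hS n‖ * ‖b‖) ^ 2 :=
    pow_le_pow_left₀ (norm_nonneg _) h1 2
  rwa [mul_pow, norm_rowStar_sq hS n] at h2

lemma memout (hS : Summable fun p : ℕ × ℕ => ‖S p‖ ^ 2) (b : L) :
    Memℓp (app S b) 2 := by
  refine memℓp_gen' (C := (∑' n, ∑' m, ‖S (n, m)‖ ^ 2) * ‖b‖ ^ 2) fun s => ?_
  have : ∀ n : ℕ, ‖app S b n‖ ^ (2 : ENNReal).toReal = ‖app S b n‖ ^ 2 := by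
    intro n; rw [two_toReal, ← Real.rpow_natCast]; norm_num
  simp only [this]
  calc ∑ n ∈ s, ‖app S b n‖ ^ 2
      ≤ ∑ n ∈ s, (∑' m, ‖S (n, m)‖ ^ 2) * ‖b‖ ^ 2 :=
        Finset.sum_le_sum fun n _ => app_sq_le hS b n
    _ = (∑ n ∈ s, ∑' m, ‖S (n, m)‖ ^ 2) * ‖b‖ ^ 2 := by rw [Finset.sum_mul]
    _ ≤ (∑' n, ∑' m, ‖S (n, m)‖ ^ 2) * ‖b‖ ^ 2 := by
        refine mul_le_mul_of_nonneg_right ?_ (sq_nonneg _)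
        exact Summable.sum_le_tsum s (fun n _ => tsum_nonneg fun m => sq_nonneg _)
          (colsumSummable hS)

/-- output as an `ℓ²` element -/
def toL (hS : Summable fun p : ℕ × ℕ => ‖S p‖ ^ 2) (b : L) : L :=
  ⟨app S b, memout hS b⟩

lemma toL_apply (hS : Summable fun p : ℕ × ℕ => ‖S p‖ ^ 2) (b : L) (n : ℕ) :
    (toL hS b : ∀ _ : ℕ, ℂ) n = ∑' m, S (n, m) * b m := rfl

end Stmt10Aux

namespace Stmt10Aux
variable {S : ℕ × ℕ → ℂ}

lemma toL_add (hS : Summable fun p : ℕ × ℕ => ‖S p‖ ^ 2) (b c : L) :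
    toL hS (b + c) = toL hS b + toL hS c := by
  apply lp.ext
  funext n
  rw [lp.coeFn_add]
  simp only [Pi.add_apply, toL_apply]
  have hb := summable_row_mul hS b n
  have hc := summable_row_mul hS c n
  rw [← Summable.tsum_add hb hc]
  refine tsum_congr fun m => ?_
  rw [lp.coeFn_add]
  simp [mul_add]

lemma toL_smul (hS : Summable fun p : ℕ × ℕ => ‖S p‖ ^ 2) (c : ℂ) (b : L) :
    toL hS (c • b) = c • toL hS b := by
  apply lp.ext
  funext n
  rw [lp.coeFn_smul]
  simp only [Pi.smul_apply, toL_apply, smul_eq_mul]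
  rw [← tsum_mul_left]
  refine tsum_congr fun m => ?_
  rw [lp.coeFn_smul]
  simp [Pi.smul_apply, smul_eq_mul]; ring

/-- total Hilbert–Schmidt square sum (iterated form) -/
def totsq (S : ℕ × ℕ → ℂ) : ℝ := ∑' n, ∑' m, ‖S (n, m)‖ ^ 2

lemma totsq_nonneg (S : ℕ × ℕ → ℂ) : 0 ≤ totsq S :=
  tsum_nonneg fun n => tsum_nonneg fun m => sq_nonneg _

lemma toL_norm_le (hS : Summable fun p : ℕ × ℕ => ‖S p‖ ^ 2) (b : L) :
    ‖toL hS b‖ ≤ Real.sqrt (totsq S) * ‖b‖ := by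
  have hsq : ‖toL hS b‖ ^ 2 ≤ totsq S * ‖b‖ ^ 2 := by
    have h := lp.norm_rpow_eq_tsum (p := 2) (by simp) (toL hS b)
    rw [two_toReal] at h
    have h2 : ‖toL hS b‖ ^ 2 = ∑' n, ‖app S b n‖ ^ 2 := by
      calc ‖toL hS b‖ ^ 2 = ‖toL hS b‖ ^ (2 : ℝ) := by
            rw [← Real.rpow_natCast]; norm_num
        _ = ∑' n, ‖(toL hS b : ∀ _ : ℕ, ℂ) n‖ ^ (2 : ℝ) := h
        _ = ∑' n, ‖app S b n‖ ^ 2 := by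
            refine tsum_congr fun n => ?_
            rw [← Real.rpow_natCast]; norm_num; rfl
    rw [h2, totsq, ← tsum_mul_right]
    have hsL : Summable fun n => ‖app S b n‖ ^ 2 := by
      have := (lp.memℓp (toL hS b))
      rw [memℓp_gen_iff (by simp : (0:ℝ) < (2 : ENNReal).toReal)] at this
      refine this.congr fun n => ?_
      rw [two_toReal, ← Real.rpow_natCast]; norm_num; rfl
    exact Summable.tsum_le_tsum (fun n => app_sq_le hS b n) hsL
      ((colsumSummable hS).mul_right _)
  have h3 : ‖toL hS b‖ = Real.sqrt (‖toL hS b‖ ^ 2) := by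
    rw [Real.sqrt_sq (norm_nonneg _)]
  rw [h3]
  calc Real.sqrt (‖toL hS b‖ ^ 2) ≤ Real.sqrt (totsq S * ‖b‖ ^ 2) :=
        Real.sqrt_le_sqrt hsq
    _ = Real.sqrt (totsq S) * ‖b‖ := by
        rw [Real.sqrt_mul (totsq_nonneg S), Real.sqrt_sq (norm_nonneg _)]

/-- the Hilbert–Schmidt kernel operator as a continuous linear map -/
def opK (hS : Summable fun p : ℕ × ℕ => ‖S p‖ ^ 2) : L →L[ℂ] L :=
  LinearMap.mkContinuous
    { toFun := toL hS
      map_add' := toL_add hS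
      map_smul' := toL_smul hS }
    (Real.sqrt (totsq S)) (toL_norm_le hS)

lemma opK_apply (hS : Summable fun p : ℕ × ℕ => ‖S p‖ ^ 2) (b : L) (n : ℕ) :
    (opK hS b : ∀ _ : ℕ, ℂ) n = ∑' m, S (n, m) * b m := rfl

lemma opK_norm_le (hS : Summable fun p : ℕ × ℕ => ‖S p‖ ^ 2) :
    ‖opK hS‖ ≤ Real.sqrt (totsq S) :=
  LinearMap.mkContinuous_norm_le _ (Real.sqrt_nonneg _) _

end Stmt10Aux

namespace Stmt10Aux

lemma tail_tendsto {ι : Type*} [DecidableEq ι] {g : ι → ℝ} (hg : Summable g) (hnn : ∀ i, 0 ≤ g i)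
    {s : ℕ → Finset ι} (hs : Filter.Tendsto s atTop atTop) :
    Filter.Tendsto (fun N => ∑' i, if i ∈ s N then 0 else g i) atTop (𝓝 0) := by
  have hsum : ∀ N, Summable (fun i => if i ∈ s N then 0 else g i) := fun N =>
    Summable.of_nonneg_of_le (fun i => by split <;> simp [hnn i])
      (fun i => by split <;> simp [hnn i]) hg
  have key : ∀ N, (∑' i, if i ∈ s N then 0 else g i) = (∑' i, g i) - ∑ i ∈ s N, g i := by
    intro N
    have h2 : (∑' i, if i ∈ s N then g i else 0) = ∑ i ∈ s N, g i := by
      rw [tsum_eq_sum (s := s N) (fun i hi => by simp [hi])]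
      exact Finset.sum_congr rfl fun i hi => by simp [hi]
    have hsum2 : Summable (fun i => if i ∈ s N then g i else 0) :=
      Summable.of_nonneg_of_le (fun i => by split <;> simp [hnn i])
        (fun i => by split <;> simp [hnn i]) hg
    have h4 := Summable.tsum_add (hsum N) hsum2
    have h5 : (fun i => (if i ∈ s N then 0 else g i) + if i ∈ s N then g i else 0) = g := by
      funext i; split <;> simp
    rw [h5] at h4
    rw [h4, h2]; ring
  simp only [key]
  have h6 : Filter.Tendsto (fun N => ∑ i ∈ s N, g i) atTop (𝓝 (∑' i, g i)) :=
    hg.hasSum.comp hs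
  simpa using (tendsto_const_nhds (x := ∑' i, g i)).sub h6

end Stmt10Aux

namespace Stmt10Aux
variable {S T : ℕ × ℕ → ℂ}

lemma totsq_eq_tsum (hS : Summable fun p : ℕ × ℕ => ‖S p‖ ^ 2) :
    totsq S = ∑' p : ℕ × ℕ, ‖S p‖ ^ 2 := (Summable.tsum_prod hS).symm

lemma opK_sub (hS : Summable fun p : ℕ × ℕ => ‖S p‖ ^ 2)
    (hT : Summable fun p : ℕ × ℕ => ‖T p‖ ^ 2)
    (hD : Summable fun p : ℕ × ℕ => ‖S p - T p‖ ^ 2) :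
    opK hS - opK hT = opK hD := by
  refine ContinuousLinearMap.ext fun b => ?_
  apply lp.ext
  funext n
  rw [ContinuousLinearMap.sub_apply, lp.coeFn_sub]
  simp only [Pi.sub_apply, opK_apply]
  rw [← Summable.tsum_sub (summable_row_mul hS b n) (summable_row_mul hT b n)]
  exact tsum_congr fun m => by ring

/-- truncated kernel -/
def truncK (S : ℕ × ℕ → ℂ) (N : ℕ) : ℕ × ℕ → ℂ :=
  fun p => if p.1 < N ∧ p.2 < N then S p else 0

lemma truncK_summable (hS : Summable fun p : ℕ × ℕ => ‖S p‖ ^ 2) (N : ℕ) :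
    Summable fun p : ℕ × ℕ => ‖truncK S N p‖ ^ 2 :=
  Summable.of_nonneg_of_le (fun p => by positivity)
    (fun p => by unfold truncK; split <;> simp [sq_nonneg, sq_abs, norm_nonneg]) hS

lemma diffK_summable (hS : Summable fun p : ℕ × ℕ => ‖S p‖ ^ 2) (N : ℕ) :
    Summable fun p : ℕ × ℕ => ‖S p - truncK S N p‖ ^ 2 :=
  Summable.of_nonneg_of_le (fun p => by positivity)
    (fun p => by unfold truncK; split <;> simp [sq_nonneg]) hS

lemma totsq_diff_tendsto (hS : Summable fun p : ℕ × ℕ => ‖S p‖ ^ 2) :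
    Filter.Tendsto (fun N => totsq (fun p => S p - truncK S N p)) atTop (𝓝 0) := by
  have hbox : Filter.Tendsto (fun N => Finset.range N ×ˢ Finset.range N) atTop atTop := by
    apply tendsto_atTop_finset_of_monotone
    · intro N M h
      exact Finset.product_subset_product (Finset.range_subset_range.2 h) (Finset.range_subset_range.2 h)
    · intro p
      exact ⟨max p.1 p.2 + 1, Finset.mem_product.2 ⟨Finset.mem_range.2 (by omega),
        Finset.mem_range.2 (by omega)⟩⟩
  have key : ∀ N, totsq (fun p => S p - truncK S N p)
      = ∑' p : ℕ × ℕ, if p ∈ Finset.range N ×ˢ Finset.range N then 0 else ‖S p‖ ^ 2 := by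
    intro N
    rw [totsq_eq_tsum (diffK_summable hS N)]
    refine tsum_congr fun p => ?_
    simp only [Finset.mem_product, Finset.mem_range]
    unfold truncK
    split <;> simp_all
  simp only [key]
  exact tail_tendsto hS (fun p => sq_nonneg _) hbox

lemma norm_sq_eq (x : L) : ‖x‖ ^ 2 = ∑' n, ‖(x : ∀ _ : ℕ, ℂ) n‖ ^ 2 := by
  have h := lp.norm_rpow_eq_tsum (p := 2) (by simp) x
  rw [two_toReal] at h
  calc ‖x‖ ^ 2 = ‖x‖ ^ (2 : ℝ) := by rw [← Real.rpow_natCast]; norm_num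
    _ = ∑' n, ‖(x : ∀ _ : ℕ, ℂ) n‖ ^ (2 : ℝ) := h
    _ = ∑' n, ‖(x : ∀ _ : ℕ, ℂ) n‖ ^ 2 := by
        refine tsum_congr fun n => ?_
        rw [← Real.rpow_natCast]; norm_num

lemma norm_eq_sqrt (x : L) : ‖x‖ = Real.sqrt (∑' n, ‖(x : ∀ _ : ℕ, ℂ) n‖ ^ 2) := by
  rw [← norm_sq_eq, Real.sqrt_sq (norm_nonneg _)]

lemma summable_coord_sq (x : L) : Summable fun n => ‖(x : ∀ _ : ℕ, ℂ) n‖ ^ 2 := by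
  have := lp.memℓp x
  rw [memℓp_gen_iff (by simp : (0:ℝ) < (2 : ENNReal).toReal)] at this
  refine this.congr fun n => ?_
  rw [two_toReal, ← Real.rpow_natCast]; norm_num

/-- truncation of an `ℓ²` element -/
def truncF (N : ℕ) (x : L) : L :=
  ⟨fun n => if n < N then (x : ∀ _ : ℕ, ℂ) n else 0, by
    apply memℓp_gen
    have hx : Summable fun n => ‖(x : ∀ _ : ℕ, ℂ) n‖ ^ (2 : ENNReal).toReal := by
      have := lp.memℓp x
      rwa [memℓp_gen_iff (by simp : (0:ℝ) < (2 : ENNReal).toReal)] at this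
    refine Summable.of_nonneg_of_le (fun n => by positivity) (fun n => ?_) hx
    split
    · exact le_rfl
    · simp only [norm_zero]
      rw [Real.zero_rpow (by simp)]
      positivity⟩

lemma truncF_apply (N : ℕ) (x : L) (n : ℕ) :
    (truncF N x : ∀ _ : ℕ, ℂ) n = if n < N then (x : ∀ _ : ℕ, ℂ) n else 0 := rfl

lemma truncF_tendsto (x : L) : Filter.Tendsto (fun N => truncF N x) atTop (𝓝 x) := by
  rw [tendsto_iff_norm_sub_tendsto_zero]
  have key : ∀ N, ‖truncF N x - x‖
      = Real.sqrt (∑' n, if n ∈ Finset.range N then 0 else ‖(x : ∀ _ : ℕ, ℂ) n‖ ^ 2) := by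
    intro N
    rw [norm_eq_sqrt]
    congr 1
    refine tsum_congr fun n => ?_
    rw [lp.coeFn_sub]
    simp only [Pi.sub_apply, truncF_apply, Finset.mem_range]
    split <;> simp
  simp only [key]
  have := tail_tendsto (summable_coord_sq x) (fun n => sq_nonneg _) tendsto_finset_range
  simpa [Function.comp_def] using (Real.continuous_sqrt.tendsto 0).comp this |>.congr (fun N => rfl)

end Stmt10Aux

namespace Stmt10Aux

/-- zero-extension of a finite vector -/
def extend (N : ℕ) (x : Fin N → ℂ) : L :=
  ⟨fun n => if h : n < N then x ⟨n, h⟩ else 0, memℓp_gen (by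
    refine summable_of_ne_finset_zero (s := Finset.range N) fun n hn => ?_
    rw [Finset.mem_range] at hn
    rw [dif_neg hn]
    simp only [norm_zero]
    exact Real.zero_rpow (by simp))⟩

lemma extend_apply (N : ℕ) (x : Fin N → ℂ) (n : ℕ) :
    (extend N x : ∀ _ : ℕ, ℂ) n = if h : n < N then x ⟨n, h⟩ else 0 := rfl

end Stmt10Aux

end

open Filter Topology Stmt10Aux


/-- Reduction (truncation) method for the infinite system `a + Ra = f` in `ℓ²`:
if `∑_{n,m}|R_{nm}|² < ∞` and the operator `A a = a + Ra` is bijective on `ℓ²`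
with `A a = f`, then for all sufficiently large `N` the truncated `N × N`
system has a unique solution, and the zero-extended truncated solutions
converge to `a` in the `ℓ²` norm. -/
theorem stmt10 (R : ℕ × ℕ → ℂ)
    (hR : Summable (fun p : ℕ × ℕ => ‖R p‖ ^ 2))
    (f : lp (fun _ : ℕ => ℂ) 2)
    (A : lp (fun _ : ℕ => ℂ) 2 → lp (fun _ : ℕ => ℂ) 2)
    (hA : ∀ (b : lp (fun _ : ℕ => ℂ) 2) (n : ℕ),
      A b n = b n + ∑' m : ℕ, R (n, m) * b m)
    (hbij : Function.Bijective A)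
    (a : lp (fun _ : ℕ => ℂ) 2) (ha : A a = f) :
    ∃ N₀ : ℕ,
      (∀ N : ℕ, N₀ ≤ N →
        ∃! x : Fin N → ℂ,
          ∀ n : Fin N, x n + ∑ m : Fin N, R (n, m) * x m = f n) ∧
      (∀ ε : ℝ, 0 < ε → ∃ N₁ : ℕ, N₀ ≤ N₁ ∧
        ∀ N : ℕ, N₁ ≤ N →
          ∀ x : Fin N → ℂ,
            (∀ n : Fin N, x n + ∑ m : Fin N, R (n, m) * x m = f n) →
            Real.sqrt (∑' n : ℕ,
                ‖(if h : n < N then x ⟨n, h⟩ else 0) - a n‖ ^ 2)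
              < ε) := by
  classical
  have hR' : Summable fun p : ℕ × ℕ => ‖R p‖ ^ 2 := by
    simpa using hR
  set K := opK hR' with hK
  set Aclm : L →L[ℂ] L := 1 + K with hAclm
  have hAeq : ∀ b : L, A b = Aclm b := by
    intro b
    apply lp.ext
    funext n
    have h1 : (A b : ∀ _ : ℕ, ℂ) n = b n + ∑' m, R (n, m) * b m := hA b n
    rw [h1, hAclm, ContinuousLinearMap.add_apply, ContinuousLinearMap.one_apply,
      lp.coeFn_add]
    simp only [Pi.add_apply]
    rw [hK, opK_apply]
  have hbijA : Function.Bijective Aclm := by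
    have hAfun : A = ⇑Aclm := funext hAeq
    rwa [hAfun] at hbij
  have hu0 : IsUnit Aclm := ContinuousLinearMap.isUnit_iff_bijective.mpr hbijA
  obtain ⟨Aunit, hAunit⟩ := hu0
  have hu0 : IsUnit Aclm := ⟨Aunit, hAunit⟩
  set AN : ℕ → (L →L[ℂ] L) := fun N => 1 + opK (truncK_summable hR' N) with hAN
  have hdiff : ∀ N, AN N - Aclm = -(opK (diffK_summable hR' N)) := by
    intro N
    rw [hAN, hAclm, hK, ← opK_sub hR' (truncK_summable hR' N) (diffK_summable hR' N)]
    show 1 + opK (truncK_summable hR' N) - (1 + opK hR') = -(opK hR' - opK (truncK_summable hR' N))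
    rw [add_sub_add_left_eq_sub, neg_sub]
  have hnorm : ∀ N, ‖AN N - Aclm‖ ≤ Real.sqrt (totsq fun p => R p - truncK R N p) := by
    intro N; rw [hdiff N, norm_neg]; exact opK_norm_le _
  have hANtend : Tendsto AN atTop (𝓝 Aclm) := by
    rw [tendsto_iff_norm_sub_tendsto_zero]
    refine squeeze_zero (fun N => norm_nonneg _) hnorm ?_
    have h2 := (Real.continuous_sqrt.tendsto 0).comp (totsq_diff_tendsto hR')
    simpa [Function.comp_def] using h2
  have hev : ∀ᶠ N in atTop, IsUnit (AN N) :=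
    hANtend.eventually (hAunit ▸ Units.nhds Aunit)
  obtain ⟨N₀, hN₀⟩ := eventually_atTop.mp hev
  have hinvtend : Tendsto (fun N => Ring.inverse (AN N)) atTop (𝓝 (Ring.inverse Aclm)) := by
    have h := NormedRing.inverse_continuousAt Aunit
    rw [hAunit] at h
    exact h.tendsto.comp hANtend
  set u : ℕ → L := fun N => Ring.inverse (AN N) (truncF N f) with hu
  have hutend : Tendsto u atTop (𝓝 a) := by
    have hfa : Aclm a = f := by rw [← hAeq a, ha]
    have hinva : Ring.inverse Aclm f = a := by
      rw [← hfa, ← ContinuousLinearMap.mul_apply, Ring.inverse_mul_cancel _ hu0,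
        ContinuousLinearMap.one_apply]
    have hcont : Continuous (fun q : (L →L[ℂ] L) × L => q.1 q.2) :=
      isBoundedBilinearMap_apply.continuous
    have h3 := (hcont.tendsto (Ring.inverse Aclm, f)).comp
      (hinvtend.prodMk_nhds (truncF_tendsto f))
    rw [hu]
    simpa [hinva, Function.comp_def] using h3
  have hANapply : ∀ N (b : L) (n : ℕ), (AN N b : ∀ _ : ℕ, ℂ) n
      = b n + ∑' m, truncK R N (n, m) * b m := by
    intro N b n
    rw [hAN, ContinuousLinearMap.add_apply, ContinuousLinearMap.one_apply, lp.coeFn_add]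
    simp only [Pi.add_apply]
    rw [opK_apply]
  -- the truncated operator applied to `u N` gives the truncated data
  have hAu : ∀ N, IsUnit (AN N) → AN N (u N) = truncF N f := by
    intro N hN
    rw [hu]
    rw [← ContinuousLinearMap.mul_apply, Ring.mul_inverse_cancel _ hN,
      ContinuousLinearMap.one_apply]
  -- any solution of the finite system extends to `u N`
  have hext : ∀ N, IsUnit (AN N) → ∀ x : Fin N → ℂ,
      (∀ n : Fin N, x n + ∑ m : Fin N, R (n, m) * x m = f n) → extend N x = u N := by
    intro N hN x hx
    have hANx : AN N (extend N x) = truncF N f := by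
      apply lp.ext
      funext n
      rw [hANapply, truncF_apply]
      have htsum : (∑' m, truncK R N (n, m) * (extend N x : ∀ _ : ℕ, ℂ) m)
          = ∑ m ∈ Finset.range N, truncK R N (n, m) * (extend N x : ∀ _ : ℕ, ℂ) m := by
        refine tsum_eq_sum fun m hm => ?_
        rw [Finset.mem_range] at hm
        have : truncK R N (n, m) = 0 := by simp [truncK, hm]
        rw [this, zero_mul]
      rw [htsum]
      by_cases hn : n < N
      · rw [if_pos hn, extend_apply, dif_pos hn]
        have hsum : (∑ m ∈ Finset.range N, truncK R N (n, m) * (extend N x : ∀ _ : ℕ, ℂ) m)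
            = ∑ m : Fin N, R (n, m) * x m := by
          rw [← Fin.sum_univ_eq_sum_range
            (fun m => truncK R N (n, m) * (extend N x : ∀ _ : ℕ, ℂ) m) N]
          refine Finset.sum_congr rfl fun m _ => ?_
          rw [extend_apply, dif_pos m.isLt]
          simp [truncK, hn, m.isLt]
        rw [hsum]
        exact hx ⟨n, hn⟩
      · rw [if_neg hn, extend_apply, dif_neg hn]
        have hz : (∑ m ∈ Finset.range N, truncK R N (n, m) * (extend N x : ∀ _ : ℕ, ℂ) m)
            = 0 := by
          refine Finset.sum_eq_zero fun m _ => ?_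
          have : truncK R N (n, m) = 0 := by simp [truncK, hn]
          rw [this, zero_mul]
        rw [hz, add_zero]
    have := congrArg (fun y => Ring.inverse (AN N) y) hANx
    simpa [← ContinuousLinearMap.mul_apply, Ring.inverse_mul_cancel _ hN, hu] using this
  -- `u N` is supported below `N` and its restriction solves the finite system
  have hsol : ∀ N, IsUnit (AN N) →
      ∀ n : Fin N, (u N : ∀ _ : ℕ, ℂ) n + ∑ m : Fin N, R (n, m) * (u N : ∀ _ : ℕ, ℂ) m
        = f n := by
    intro N hN n
    have h1 := congrArg (fun y : L => (y : ∀ _ : ℕ, ℂ) n) (hAu N hN)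
    simp only at h1
    rw [hANapply, truncF_apply, if_pos n.isLt] at h1
    have htsum : (∑' m, truncK R N (n, m) * (u N : ∀ _ : ℕ, ℂ) m)
        = ∑ m : Fin N, R (n, m) * (u N : ∀ _ : ℕ, ℂ) m := by
      refine (tsum_eq_sum (s := Finset.range N) fun m hm => ?_).trans ?_
      · rw [Finset.mem_range] at hm
        simp [truncK, hm]
      · rw [Fin.sum_univ_eq_sum_range (fun m => R ((n : ℕ), m) * (u N : ∀ _ : ℕ, ℂ) m) N]
        refine Finset.sum_congr rfl fun m hm => ?_
        rw [Finset.mem_range] at hm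
        simp [truncK, n.isLt, hm]
    rw [htsum] at h1
    exact h1
  refine ⟨N₀, ?_, ?_⟩
  · -- unique solvability
    intro N hNge
    have hN := hN₀ N hNge
    refine ⟨fun i : Fin N => (u N : ∀ _ : ℕ, ℂ) i, hsol N hN, ?_⟩
    intro y hy
    have h2 := hext N hN y hy
    funext i
    have h3 := congrArg (fun z : L => (z : ∀ _ : ℕ, ℂ) i) h2
    simpa [extend_apply, Fin.eta] using h3
  · -- convergence
    intro ε hε
    obtain ⟨N₂, hN₂⟩ := Metric.tendsto_atTop.mp hutend ε hε
    refine ⟨max N₀ N₂, le_max_left _ _, ?_⟩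
    intro N hNge x hx
    have hN := hN₀ N (le_trans (le_max_left _ _) hNge)
    have h2 := hext N hN x hx
    have h4 : Real.sqrt (∑' n : ℕ,
        ‖(if h : n < N then x ⟨n, h⟩ else 0) - a n‖ ^ 2)
        = ‖extend N x - a‖ := by
      rw [norm_eq_sqrt]
      refine congrArg Real.sqrt (tsum_congr fun n => ?_)
      rw [lp.coeFn_sub]
      simp only [Pi.sub_apply, extend_apply]
    rw [h4, h2, ← dist_eq_norm]
    exact hN₂ N (le_trans (le_max_right _ _) hNge)
end
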